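/- Let C, D be nonzero rationals and f(x,y) = Cx² + Dy². Then f has a rational periodic vector of type (L,L,L) if and only if there exist rational numbers τ ∉ {−1, 0} and n ≠ 0 such that CD = −(τ⁶ + 2τ⁵ + 4τ⁴ + 8τ³ + 9τ² + 4τ + 1)/(4n²τ²(τ+1)²). -/

import Mathlib

private lemma Ppos (a : ℚ) : a^6+2*a^5+4*a^4+8*a^3+9*a^2+4*a+1 > 0 := by
  nlinarith [sq_nonneg (a^3+a^2+2*a), sq_nonneg (a^3+a^2+a), sq_nonneg (a^3+a^2),
    sq_nonneg (a^2+a), sq_nonneg (a^2+2*a+1), sq_nonneg (a+1), sq_nonneg (2*a+1),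
    sq_nonneg a, sq_nonneg (a^2-1), sq_nonneg (a^3+a^2+2*a+1)]

theorem type_LLL_criterion (C D : ℚ) (hC : C ≠ 0) (hD : D ≠ 0) :
    (∃ x Y : ℚ,
        (fun u : ℚ => C * u ^ 2 + D * Y ^ 2)^[3] x = x ∧
        (fun u : ℚ => C * u ^ 2 + D * Y ^ 2) x ≠ x) ↔
      ∃ τ n : ℚ, τ ≠ -1 ∧ τ ≠ 0 ∧ n ≠ 0 ∧
        C * D = -(τ ^ 6 + 2 * τ ^ 5 + 4 * τ ^ 4 + 8 * τ ^ 3 + 9 * τ ^ 2 + 4 * τ + 1) /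
          (4 * n ^ 2 * τ ^ 2 * (τ + 1) ^ 2) := by
  constructor
  · rintro ⟨x, Y, h3, h1⟩
    have h1' : C * x ^ 2 + D * Y ^ 2 ≠ x := h1
    have h3' : C * (C * (C * x ^ 2 + D * Y ^ 2) ^ 2 + D * Y ^ 2) ^ 2 + D * Y ^ 2 = x := by
      have h := h3
      simp only [Function.iterate_succ, Function.iterate_zero, Function.comp_apply,
        id_eq] at h
      exact h
    set yq := C * x ^ 2 + D * Y ^ 2 with hyq
    set zq := C * yq ^ 2 + D * Y ^ 2 with hzq
    -- h3' : C * zq ^ 2 + D * Y ^ 2 = x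
    have hxz : zq ≠ x := by
      intro h
      apply h1'
      rw [← h3', h, ← hyq]
    have hyz : zq ≠ yq := by
      intro h
      apply hxz
      rw [← h3', h, ← hzq]
      exact h.symm
    set X := C * x with hXd
    set Yv := C * yq with hYd
    set Z := C * zq with hZd
    set k := C * D * Y ^ 2 with hkd
    have E1 : X ^ 2 + k = Yv := by rw [hXd, hYd, hkd, hyq]; ring
    have E2 : Yv ^ 2 + k = Z := by rw [hYd, hZd, hkd, hzq]; ring
    have E3 : Z ^ 2 + k = X := by rw [hZd, hXd, hkd]; linear_combination C * h3'
    have hXY : X ≠ Yv := fun h => h1' (mul_left_cancel₀ hC h.symm)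
    have hXZ : X ≠ Z := fun h => hxz (mul_left_cancel₀ hC h).symm
    have hYZ : Yv ≠ Z := fun h => hyz (mul_left_cancel₀ hC h).symm
    set a := X + Yv with ha
    have ha0 : a ≠ 0 := by
      intro h
      apply hYZ
      linear_combination -E1 + E2 + (X - Yv) * h
    have ha1 : a ≠ -1 := by
      intro h
      apply hXZ
      linear_combination -E1 + E2 + (X - Yv) * h
    have ha1' : a + 1 ≠ 0 := fun h => ha1 (by linarith)
    have key : (X - Yv) * ((Yv + Z) * a + (1 + a)) = 0 := by
      linear_combination (Yv + Z + 1) * E1 - (Yv + Z) * E2 - E3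
    have hb : (Yv + Z) * a + (1 + a) = 0 :=
      (mul_eq_zero.mp key).resolve_left (sub_ne_zero_of_ne hXY)
    have key2 : (X - Yv) * ((Z + X) * (1 + a) + 1) = 0 := by
      linear_combination (Z + X + 1) * E1 - (Z + X) * E2 - E3
    have hc : (Z + X) * (1 + a) + 1 = 0 :=
      (mul_eq_zero.mp key2).resolve_left (sub_ne_zero_of_ne hXY)
    have hXa : 2 * X * a * (1 + a) = a^3 + 2*a^2 + a + 1 := by
      linear_combination (-(1 + a)) * hb + a * hc
    have hk4 : 4 * a^2 * (a+1)^2 * k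
        = -(a^6+2*a^5+4*a^4+8*a^3+9*a^2+4*a+1) := by
      linear_combination (4*a^2*(a+1)^2) * E1
        - (2*a*(1+a) + (a^3+2*a^2+a+1) + 2*X*a*(1+a)) * hXa
    have hY0 : Y ≠ 0 := by
      intro h
      have hk0 : k = 0 := by rw [hkd, h]; ring
      rw [hk0, mul_zero] at hk4
      have := Ppos a
      linarith
    refine ⟨a, Y, ha1, ha0, hY0, ?_⟩
    rw [eq_div_iff (mul_ne_zero (mul_ne_zero (mul_ne_zero (by norm_num : (4:ℚ) ≠ 0)
        (pow_ne_zero _ hY0)) (pow_ne_zero _ ha0)) (pow_ne_zero _ ha1'))]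
    linear_combination hk4 - (4 * a^2 * (a+1)^2) * hkd
  · rintro ⟨τ, n, ht1, ht0, hn, h⟩
    have ht1' : τ + 1 ≠ 0 := fun h => ht1 (by linarith)
    have hden : 2*τ*(τ+1)*C ≠ 0 :=
      mul_ne_zero (mul_ne_zero (mul_ne_zero two_ne_zero ht0) ht1') hC
    have hk : 4 * τ^2 * (τ+1)^2 * (C * D * n^2)
        = -(τ^6+2*τ^5+4*τ^4+8*τ^3+9*τ^2+4*τ+1) := by
      rw [h]; field_simp
    set x : ℚ := (τ^3+2*τ^2+τ+1)/(2*τ*(τ+1)*C) with hx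
    set y : ℚ := (τ^3-τ-1)/(2*τ*(τ+1)*C) with hy
    set z : ℚ := -(τ^3+2*τ^2+3*τ+1)/(2*τ*(τ+1)*C) with hz
    have e1 : C * x^2 + D * n^2 = y := by
      rw [hx, hy]; field_simp; linear_combination hk
    have e2 : C * y^2 + D * n^2 = z := by
      rw [hy, hz]; field_simp; linear_combination hk
    have e3 : C * z^2 + D * n^2 = x := by
      rw [hz, hx]; field_simp; linear_combination hk
    refine ⟨x, n, ?_, ?_⟩
    · show (fun u : ℚ => C * u ^ 2 + D * n ^ 2) ((fun u : ℚ => C * u ^ 2 + D * n ^ 2)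
        ((fun u : ℚ => C * u ^ 2 + D * n ^ 2) x)) = x
      simp only [e1, e2, e3]
    · show C * x ^ 2 + D * n ^ 2 ≠ x
      rw [e1]
      intro hEq
      rw [hy, hx, div_eq_div_iff hden hden] at hEq
      have h0 : (τ^2+τ+1) * (2*τ*(τ+1)*C) = 0 := by
        linear_combination (-(1:ℚ)/2) * hEq
      rcases mul_eq_zero.mp h0 with h' | h'
      · nlinarith [sq_nonneg (2*τ+1)]
      · exact hden h'
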